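/- Let n ≥ 4 be even, 0 ≤ ε ≤ π/(2n), and define for k = 1,…,n and j = 1,…,n the 2×2 matrices N_k^{(j)} = cos(kπ/n + δ_k^{(j)}ε)·σx + sin(kπ/n + δ_k^{(j)}ε)·σy, where δ_k^{(j)} = (−1)^k if j ≤ n/2 and δ_k^{(j)} = −(−1)^k if j > n/2. Let |ψₙ⟩ = (1/2)·(|0⟩^{⊗n/2} + e^{iπ/4}|1⟩^{⊗n/2}) ⊗ (|0⟩^{⊗n/2} + e^{−iπ/4}|1⟩^{⊗n/2}) ∈ ℂ^{2ⁿ}, and let 𝒲ᵉ = (1/2)·[ 𝟙^{⊗n} − Σ_{ℓ=±1} ((𝟙 + ℓ·σz)/2)^{⊗n} − (1/n)·Σ_{k=1}^{n} (−1)^k · (N_k^{(1)} ⊗ N_k^{(2)} ⊗ ⋯ ⊗ N_k^{(n)}) ]. Then ⟨ψₙ| 𝒲ᵉ |ψₙ⟩ = −(1/4)·sin(nε); in particular this is negative for 0 < ε ≤ π/(2n). -/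

import Mathlib

open Matrix Real

noncomputable def σx : Matrix (Fin 2) (Fin 2) ℂ := !![0, 1; 1, 0]
noncomputable def σy : Matrix (Fin 2) (Fin 2) ℂ := !![0, -Complex.I; Complex.I, 0]
noncomputable def σz : Matrix (Fin 2) (Fin 2) ℂ := !![1, 0; 0, -1]

/-- n-fold Kronecker power A^{⊗n} of a 2×2 matrix, on the index set Fin n → Fin 2. -/
noncomputable def kronPow (n : ℕ) (A : Matrix (Fin 2) (Fin 2) ℂ) :
    Matrix (Fin n → Fin 2) (Fin n → Fin 2) ℂ :=
  Matrix.of fun i j => ∏ t, A (i t) (j t)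

/-- Kronecker product A₁ ⊗ A₂ ⊗ ⋯ ⊗ Aₙ of a family of 2×2 matrices. -/
noncomputable def kronFam (n : ℕ) (A : Fin n → Matrix (Fin 2) (Fin 2) ℂ) :
    Matrix (Fin n → Fin 2) (Fin n → Fin 2) ℂ :=
  Matrix.of fun i j => ∏ t, A t (i t) (j t)

section Helpers

lemma prodIndic {α : Type*} (s : Finset α) (f : α → Fin 2) (v : Fin 2) :
    (∏ t ∈ s, if f t = v then (1:ℂ) else 0) = if ∀ t ∈ s, f t = v then 1 else 0 := by
  by_cases h : ∀ t ∈ s, f t = v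
  · rw [if_pos h]; exact Finset.prod_eq_one fun t ht => if_pos (h t ht)
  · rw [if_neg h]
    push_neg at h
    obtain ⟨t, ht, hf⟩ := h
    exact Finset.prod_eq_zero ht (if_neg hf)

lemma vec10 (x : Fin 2) : (![1,0] : Fin 2 → ℂ) x = if x = 0 then 1 else 0 := by
  fin_cases x <;> simp

lemma vec01 (x : Fin 2) : (![0,1] : Fin 2 → ℂ) x = if x = 1 then 1 else 0 := by
  fin_cases x <;> simp

lemma expRI (x : ℝ) :
    Complex.exp ((x:ℂ) * Complex.I) = (Real.cos x : ℂ) + (Real.sin x : ℂ) * Complex.I := by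
  rw [Complex.exp_mul_I]
  simp [Complex.ofReal_cos, Complex.ofReal_sin]

lemma expRIneg (x : ℝ) :
    Complex.exp (-(x:ℂ) * Complex.I) = (Real.cos x : ℂ) - (Real.sin x : ℂ) * Complex.I := by
  rw [show -(x:ℂ) * Complex.I = (-(x:ℂ)) * Complex.I by ring, Complex.exp_mul_I,
    Complex.cos_neg, Complex.sin_neg]
  simp [Complex.ofReal_cos, Complex.ofReal_sin]
  ring

lemma exp_neg_k_pi (k : ℕ) : Complex.exp (-((k:ℂ) * (π:ℂ)) * Complex.I) = (-1)^k := by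
  have : -((k:ℂ) * (π:ℂ)) * Complex.I = (k:ℕ) * (-(π:ℂ) * Complex.I) := by ring
  rw [this, Complex.exp_nat_mul]
  congr 1
  rw [show -(π:ℂ) * Complex.I = -((π:ℂ) * Complex.I) by ring, Complex.exp_neg,
    Complex.exp_pi_mul_I]
  norm_num

lemma exp_k_pi (k : ℕ) : Complex.exp ((k:ℂ) * (π:ℂ) * Complex.I) = (-1)^k := by
  have : (k:ℂ) * (π:ℂ) * Complex.I = (k:ℕ) * ((π:ℂ) * Complex.I) := by ring
  rw [this, Complex.exp_nat_mul, Complex.exp_pi_mul_I]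

lemma cardFilterLt (n m : ℕ) (h : m ≤ n) :
    (Finset.univ.filter fun t : Fin n => (t:ℕ) < m).card = m := by
  have himg : (Finset.univ.filter fun t : Fin n => (t:ℕ) < m).image (Fin.val)
      = Finset.range m := by
    ext x
    simp only [Finset.mem_image, Finset.mem_filter, Finset.mem_univ, true_and,
      Finset.mem_range]
    constructor
    · rintro ⟨t, ht, rfl⟩; exact ht
    · intro hx; exact ⟨⟨x, lt_of_lt_of_le hx h⟩, hx, rfl⟩
  rw [← Finset.card_image_of_injective _ Fin.val_injective, himg, Finset.card_range]

lemma sumNegOnePowIcc (n : ℕ) (hn : Even n) :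
    ∑ k ∈ Finset.Icc 1 n, ((-1:ℂ))^k = 0 := by
  induction n using Nat.twoStepInduction with
  | zero => simp
  | one => exact absurd hn (by decide)
  | more n ih _ =>
    have h1 : Finset.Icc 1 (n+2) = insert (n+2) (Finset.Icc 1 (n+1)) := by
      ext x; simp [Finset.mem_Icc]; omega
    have h2 : Finset.Icc 1 (n+1) = insert (n+1) (Finset.Icc 1 n) := by
      ext x; simp [Finset.mem_Icc]; omega
    rw [h1, Finset.sum_insert (by simp), h2, Finset.sum_insert (by simp),
      ih (by rcases hn with ⟨m, hm⟩; exact ⟨m-1, by omega⟩)]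
    rw [pow_succ]
    ring

lemma NEnt (θ : ℝ) (x y : Fin 2) :
    (Real.cos θ • σx + Real.sin θ • σy : Matrix (Fin 2) (Fin 2) ℂ) x y
    = if x = 0 ∧ y = 1 then Complex.exp (-(θ:ℂ) * Complex.I)
      else if x = 1 ∧ y = 0 then Complex.exp ((θ:ℂ) * Complex.I) else 0 := by
  fin_cases x <;> fin_cases y <;>
    simp only [σx, σy, Matrix.add_apply, Matrix.smul_apply, Complex.real_smul,
      Matrix.cons_val', Matrix.cons_val_zero, Matrix.cons_val_one, Matrix.head_cons,
      Matrix.empty_val', Matrix.cons_val_fin_one, Matrix.head_fin_const] <;>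
    norm_num <;>
    [(rw [show -((θ:ℂ) * Complex.I) = (-(θ:ℂ)) * Complex.I by ring,
        Complex.exp_mul_I, Complex.cos_neg, Complex.sin_neg]; ring);
     (rw [Complex.exp_mul_I])]

lemma PpEnt (x y : Fin 2) :
    ((1 / 2 : ℂ) • ((1 : Matrix (Fin 2) (Fin 2) ℂ) + (1:ℝ) • σz)) x y
    = if x = 0 ∧ y = 0 then 1 else 0 := by
  fin_cases x <;> fin_cases y <;> simp [σz, Matrix.one_apply] <;> norm_num

lemma PmEnt (x y : Fin 2) :
    ((1 / 2 : ℂ) • ((1 : Matrix (Fin 2) (Fin 2) ℂ) + (-1:ℝ) • σz)) x y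
    = if x = 1 ∧ y = 1 then 1 else 0 := by
  fin_cases x <;> fin_cases y <;> simp [σz, Matrix.one_apply] <;> norm_num

end Helpers

set_option maxHeartbeats 1000000 in
theorem stmt14 (n : ℕ) (hn : 4 ≤ n) (heven : Even n)
    (ε : ℝ) (hε₀ : 0 ≤ ε) (hε₁ : ε ≤ π / (2 * n))
    (δ : ℕ → Fin n → ℝ)
    (hδ : ∀ k j, δ k j = if (j : ℕ) < n / 2 then (-1 : ℝ) ^ k else -(-1 : ℝ) ^ k)
    (N : ℕ → Fin n → Matrix (Fin 2) (Fin 2) ℂ)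
    (hN : ∀ k j, N k j = cos ((k : ℝ) * π / n + δ k j * ε) • σx
                       + sin ((k : ℝ) * π / n + δ k j * ε) • σy)
    (ψ : (Fin n → Fin 2) → ℂ)
    (hψ : ψ = fun i => (1 / 2 : ℂ) *
      ((∏ t ∈ Finset.univ.filter (fun t : Fin n => (t : ℕ) < n / 2), (![1, 0] : Fin 2 → ℂ) (i t))
        + Complex.exp (Complex.I * (π / 4)) *
          ∏ t ∈ Finset.univ.filter (fun t : Fin n => (t : ℕ) < n / 2), (![0, 1] : Fin 2 → ℂ) (i t)) *
      ((∏ t ∈ Finset.univ.filter (fun t : Fin n => ¬ (t : ℕ) < n / 2), (![1, 0] : Fin 2 → ℂ) (i t))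
        + Complex.exp (-(Complex.I) * (π / 4)) *
          ∏ t ∈ Finset.univ.filter (fun t : Fin n => ¬ (t : ℕ) < n / 2), (![0, 1] : Fin 2 → ℂ) (i t)))
    (W : Matrix (Fin n → Fin 2) (Fin n → Fin 2) ℂ)
    (hW : W = (1 / 2 : ℂ) • ((1 : Matrix (Fin n → Fin 2) (Fin n → Fin 2) ℂ)
        - ∑ l ∈ ({1, -1} : Finset ℝ),
            kronPow n ((1 / 2 : ℂ) • ((1 : Matrix (Fin 2) (Fin 2) ℂ) + l • σz))
        - (n : ℂ)⁻¹ • ∑ k ∈ Finset.Icc 1 n, ((-1 : ℂ)) ^ k • kronFam n (N k))) :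
    star ψ ⬝ᵥ W.mulVec ψ = ((-(1 / 4) * sin (n * ε) : ℝ) : ℂ) ∧
    (0 < ε → (-(1 / 4) * sin (n * ε) : ℝ) < 0) := by
  classical
  obtain ⟨m, hm⟩ := heven
  have hn2 : n / 2 = m := by omega
  have h0m : 0 < m := by omega
  have hm0 : m ≠ 0 := by omega
  have hmn : m < n := by omega
  have hnR : (n:ℝ) ≠ 0 := Nat.cast_ne_zero.mpr (by omega)
  have hnC : (n:ℂ) ≠ 0 := Nat.cast_ne_zero.mpr (by omega)
  have hn2C : (n:ℂ) = 2 * m := by rw [hm]; push_cast; ring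
  have hn2R : (n:ℝ) = 2 * m := by rw [hm]; push_cast; ring
  rw [hn2] at hδ hψ
  set e : Fin 2 → Fin 2 → (Fin n → Fin 2) :=
    fun a b t => if (t:ℕ) < m then a else b with he
  have heF1 : ∀ a b (t : Fin n), (t:ℕ) < m → e a b t = a := fun a b t ht => if_pos ht
  have heF2 : ∀ a b (t : Fin n), ¬(t:ℕ) < m → e a b t = b := fun a b t ht => if_neg ht
  have hcard1 : (Finset.univ.filter fun t : Fin n => (t:ℕ) < m).card = m :=
    cardFilterLt n m (by omega)
  have hcard2 : (Finset.univ.filter fun t : Fin n => ¬(t:ℕ) < m).card = m := by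
    have h := Finset.card_filter_add_card_filter_not
      (s := (Finset.univ : Finset (Fin n))) (p := fun t : Fin n => (t:ℕ) < m)
    rw [hcard1, Finset.card_univ, Fintype.card_fin] at h
    omega
  have hsplit : ∀ (f : Fin n → ℂ) (c1 c2 : ℂ),
      (∀ t : Fin n, (t:ℕ) < m → f t = c1) → (∀ t : Fin n, ¬(t:ℕ) < m → f t = c2) →
      ∏ t, f t = c1 ^ m * c2 ^ m := by
    intro f c1 c2 h1 h2
    rw [← Finset.prod_filter_mul_prod_filter_not Finset.univ (fun t : Fin n => (t:ℕ) < m)]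
    rw [Finset.prod_congr rfl (fun t ht => h1 t (Finset.mem_filter.mp ht).2),
      Finset.prod_congr rfl (fun t ht => h2 t (Finset.mem_filter.mp ht).2),
      Finset.prod_const, Finset.prod_const, hcard1, hcard2]
  have hee : ∀ a b c d : Fin 2, e a b = e c d ↔ (a = c ∧ b = d) := by
    intro a b c d
    constructor
    · intro h
      constructor
      · have h0 := congrFun h ⟨0, by omega⟩
        simpa [he, h0m] using h0
      · have h1 := congrFun h ⟨m, hmn⟩
        simpa [he] using h1
    · rintro ⟨rfl, rfl⟩; rfl
  have hprodF1 : ∀ (v : Fin 2 → ℂ) (a b : Fin 2),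
      (∏ t ∈ Finset.univ.filter (fun t : Fin n => (t:ℕ) < m), v (e a b t)) = v a ^ m := by
    intro v a b
    rw [Finset.prod_congr rfl
      (fun t ht => by rw [heF1 a b t (Finset.mem_filter.mp ht).2]),
      Finset.prod_const, hcard1]
  have hprodF2 : ∀ (v : Fin 2 → ℂ) (a b : Fin 2),
      (∏ t ∈ Finset.univ.filter (fun t : Fin n => ¬(t:ℕ) < m), v (e a b t)) = v b ^ m := by
    intro v a b
    rw [Finset.prod_congr rfl
      (fun t ht => by rw [heF2 a b t (Finset.mem_filter.mp ht).2]),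
      Finset.prod_const, hcard2]
  have hψv : ∀ a b : Fin 2, ψ (e a b) =
      (1/2 : ℂ) * (if a = 0 then 1 else Complex.exp (Complex.I * (π/4)))
        * (if b = 0 then 1 else Complex.exp (-Complex.I * (π/4))) := by
    intro a b
    rw [hψ]
    simp only
    rw [hprodF1, hprodF1, hprodF2, hprodF2]
    fin_cases a <;> fin_cases b <;>
      norm_num [zero_pow hm0]
  have hifunext : ∀ (i : Fin n → Fin 2) (a b : Fin 2),
      (∀ t : Fin n, (t:ℕ) < m → i t = a) →
      (∀ t : Fin n, m ≤ (t:ℕ) → i t = b) →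
      i = e a b := by
    intro i a b h1 h2
    funext t
    by_cases ht : (t:ℕ) < m
    · rw [heF1 a b t ht]; exact h1 t ht
    · rw [heF2 a b t ht]; exact h2 t (le_of_not_gt ht)
  have hψ0 : ∀ i : Fin n → Fin 2, (∀ a b, i ≠ e a b) → ψ i = 0 := by
    intro i hi
    rw [hψ]
    simp only
    rw [Finset.prod_congr rfl (fun t _ => vec10 (i t)),
      Finset.prod_congr rfl (fun t _ => vec01 (i t)),
      Finset.prod_congr rfl (fun t _ => vec10 (i t)),
      Finset.prod_congr rfl (fun t _ => vec01 (i t)),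
      prodIndic, prodIndic, prodIndic, prodIndic]
    by_cases hA : ∀ t : Fin n, (t:ℕ) < m → i t = 0
    · by_cases hC : ∀ t : Fin n, m ≤ (t:ℕ) → i t = 0
      · exact absurd (hifunext i 0 0 hA hC) (hi 0 0)
      · by_cases hD : ∀ t : Fin n, m ≤ (t:ℕ) → i t = 1
        · exact absurd (hifunext i 0 1 hA hD) (hi 0 1)
        · simp [hC, hD]
    · by_cases hB : ∀ t : Fin n, (t:ℕ) < m → i t = 1
      · by_cases hC : ∀ t : Fin n, m ≤ (t:ℕ) → i t = 0
        · exact absurd (hifunext i 1 0 hB hC) (hi 1 0)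
        · by_cases hD : ∀ t : Fin n, m ≤ (t:ℕ) → i t = 1
          · exact absurd (hifunext i 1 1 hB hD) (hi 1 1)
          · simp [hC, hD]
      · simp [hA, hB]
  set S : Finset (Fin n → Fin 2) := {e 0 0, e 0 1, e 1 0, e 1 1} with hSdef
  have hmemS : ∀ a b : Fin 2, e a b ∈ S := by
    intro a b
    fin_cases a <;> fin_cases b <;> simp [hSdef]
  have hzero : ∀ i : Fin n → Fin 2, i ∉ S → ψ i = 0 := by
    intro i hi
    refine hψ0 i fun a b hab => hi ?_
    rw [hab]; exact hmemS a b
  have hdot : star ψ ⬝ᵥ W.mulVec ψ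
      = ∑ i ∈ S, (starRingEnd ℂ) (ψ i) * ∑ j ∈ S, W i j * ψ j := by
    have h1 : star ψ ⬝ᵥ W.mulVec ψ
        = ∑ i : Fin n → Fin 2, (starRingEnd ℂ) (ψ i) * ∑ j, W i j * ψ j := by
      simp [dotProduct, Matrix.mulVec, Complex.star_def]
    rw [h1]
    rw [← Finset.sum_subset (Finset.subset_univ S)
      (fun i _ hi => by rw [hzero i hi]; simp)]
    refine Finset.sum_congr rfl fun i _ => ?_
    congr 1
    rw [← Finset.sum_subset (Finset.subset_univ S)
      (fun j _ hj => by rw [hzero j hj]; simp)]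
  have hne1 : e 0 0 ≠ e 0 1 := by simp [hee]
  have hne2 : e 0 0 ≠ e 1 0 := by simp [hee]
  have hne3 : e 0 0 ≠ e 1 1 := by simp [hee]
  have hne4 : e 0 1 ≠ e 1 0 := by simp [hee]
  have hne5 : e 0 1 ≠ e 1 1 := by simp [hee]
  have hne6 : e 1 0 ≠ e 1 1 := by simp [hee]
  have hexp : ∀ g : (Fin n → Fin 2) → ℂ,
      ∑ x ∈ S, g x = g (e 0 0) + g (e 0 1) + g (e 1 0) + g (e 1 1) := by
    intro g
    rw [hSdef]
    rw [Finset.sum_insert (by simp [hne1, hne2, hne3]),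
      Finset.sum_insert (by simp [hne4, hne5]),
      Finset.sum_insert (by simp [hne6]),
      Finset.sum_singleton]
    ring
  have hWent : ∀ i j : Fin n → Fin 2, W i j = (1/2 : ℂ) * ((if i = j then (1:ℂ) else 0)
      - (kronPow n ((1/2:ℂ) • (1 + (1:ℝ) • σz)) i j
         + kronPow n ((1/2:ℂ) • (1 + (-1:ℝ) • σz)) i j)
      - (n:ℂ)⁻¹ * ∑ k ∈ Finset.Icc 1 n, (-1:ℂ)^k * kronFam n (N k) i j) := by
    intro i j
    rw [hW, Finset.sum_pair (by norm_num : (1:ℝ) ≠ -1)]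
    simp [Matrix.sub_apply, Matrix.add_apply, Matrix.smul_apply, Matrix.one_apply,
      Matrix.sum_apply, smul_eq_mul, Finset.mul_sum]
  -- entries of the projector kronecker powers
  have hPp : ∀ a b c d : Fin 2,
      kronPow n ((1/2:ℂ) • (1 + (1:ℝ) • σz)) (e a b) (e c d)
      = (if a = 0 ∧ c = 0 then (1:ℂ) else 0) * (if b = 0 ∧ d = 0 then (1:ℂ) else 0) := by
    intro a b c d
    show (∏ t, ((1/2:ℂ) • (1 + (1:ℝ) • σz)) (e a b t) (e c d t)) = _
    rw [hsplit _ (((1/2:ℂ) • (1 + (1:ℝ) • σz)) a c) (((1/2:ℂ) • (1 + (1:ℝ) • σz)) b d)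
      (fun t ht => by rw [heF1 a b t ht, heF1 c d t ht])
      (fun t ht => by rw [heF2 a b t ht, heF2 c d t ht]),
      PpEnt, PpEnt]
    split_ifs <;> simp [zero_pow hm0]
  have hPm : ∀ a b c d : Fin 2,
      kronPow n ((1/2:ℂ) • (1 + (-1:ℝ) • σz)) (e a b) (e c d)
      = (if a = 1 ∧ c = 1 then (1:ℂ) else 0) * (if b = 1 ∧ d = 1 then (1:ℂ) else 0) := by
    intro a b c d
    show (∏ t, ((1/2:ℂ) • (1 + (-1:ℝ) • σz)) (e a b t) (e c d t)) = _
    rw [hsplit _ (((1/2:ℂ) • (1 + (-1:ℝ) • σz)) a c) (((1/2:ℂ) • (1 + (-1:ℝ) • σz)) b d)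
      (fun t ht => by rw [heF1 a b t ht, heF1 c d t ht])
      (fun t ht => by rw [heF2 a b t ht, heF2 c d t ht]),
      PmEnt, PmEnt]
    split_ifs <;> simp [zero_pow hm0]
  -- entries of the N kronecker products
  set Ent : ℝ → Fin 2 → Fin 2 → ℂ := fun θ x y =>
    if x = 0 ∧ y = 1 then Complex.exp (-(θ:ℂ) * Complex.I)
    else if x = 1 ∧ y = 0 then Complex.exp ((θ:ℂ) * Complex.I) else 0 with hEntdef
  set θ1 : ℕ → ℝ := fun k => (k:ℝ) * π / n + (-1:ℝ)^k * ε with hθ1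
  set θ2 : ℕ → ℝ := fun k => (k:ℝ) * π / n + (-(-1:ℝ)^k) * ε with hθ2
  have hNent1 : ∀ (k : ℕ) (t : Fin n) (x y : Fin 2), (t:ℕ) < m →
      N k t x y = Ent (θ1 k) x y := by
    intro k t x y ht
    rw [hN k t, hδ k t, if_pos ht, NEnt]
  have hNent2 : ∀ (k : ℕ) (t : Fin n) (x y : Fin 2), ¬(t:ℕ) < m →
      N k t x y = Ent (θ2 k) x y := by
    intro k t x y ht
    rw [hN k t, hδ k t, if_neg ht, NEnt]
  have hNF : ∀ (k : ℕ) (a b c d : Fin 2),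
      kronFam n (N k) (e a b) (e c d) = Ent (θ1 k) a c ^ m * Ent (θ2 k) b d ^ m := by
    intro k a b c d
    show (∏ t, N k t (e a b t) (e c d t)) = _
    exact hsplit _ _ _
      (fun t ht => by rw [heF1 a b t ht, heF1 c d t ht]; exact hNent1 k t a c ht)
      (fun t ht => by rw [heF2 a b t ht, heF2 c d t ht]; exact hNent2 k t b d ht)
  have hEntdiag : ∀ (θ : ℝ) (x : Fin 2), Ent θ x x = 0 := by
    intro θ x
    fin_cases x <;> simp [hEntdef]
  have hFzero : ∀ (k : ℕ) (a b c d : Fin 2), a = c ∨ b = d →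
      kronFam n (N k) (e a b) (e c d) = 0 := by
    intro k a b c d h
    rw [hNF]
    rcases h with rfl | rfl
    · rw [hEntdiag, zero_pow hm0, zero_mul]
    · rw [hEntdiag, zero_pow hm0, mul_zero]
  have hmC : (m:ℂ) ≠ 0 := Nat.cast_ne_zero.mpr hm0
  have hF0011 : ∀ k : ℕ, kronFam n (N k) (e 0 0) (e 1 1) = (-1:ℂ)^k := by
    intro k
    rw [hNF]
    simp only [hEntdef]
    norm_num
    rw [← Complex.exp_nat_mul, ← Complex.exp_nat_mul, ← Complex.exp_add]
    rw [show (m:ℂ) * -((θ1 k:ℝ) * Complex.I) + (m:ℂ) * -((θ2 k:ℝ) * Complex.I)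
        = -((k:ℂ) * (π:ℂ)) * Complex.I by
        simp only [hθ1, hθ2]; push_cast; rw [hn2C]; field_simp; ring,
      exp_neg_k_pi]
  have hF1100 : ∀ k : ℕ, kronFam n (N k) (e 1 1) (e 0 0) = (-1:ℂ)^k := by
    intro k
    rw [hNF]
    simp only [hEntdef]
    norm_num
    rw [← Complex.exp_nat_mul, ← Complex.exp_nat_mul, ← Complex.exp_add]
    rw [show (m:ℂ) * ((θ1 k:ℝ) * Complex.I) + (m:ℂ) * ((θ2 k:ℝ) * Complex.I)
        = ((k:ℂ) * (π:ℂ)) * Complex.I by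
        simp only [hθ1, hθ2]; push_cast; rw [hn2C]; field_simp; ring,
      exp_k_pi]
  have hF0110 : ∀ k : ℕ, kronFam n (N k) (e 0 1) (e 1 0)
      = Complex.exp (-((((-1:ℝ)^k * ((n:ℝ) * ε)) : ℝ) : ℂ) * Complex.I) := by
    intro k
    rw [hNF]
    simp only [hEntdef]
    norm_num
    rw [← Complex.exp_nat_mul, ← Complex.exp_nat_mul, ← Complex.exp_add]
    congr 1
    simp only [hθ1, hθ2]; push_cast; rw [hn2C]; field_simp; ring
  have hF1001 : ∀ k : ℕ, kronFam n (N k) (e 1 0) (e 0 1)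
      = Complex.exp ((((-1:ℝ)^k * ((n:ℝ) * ε)) : ℝ) * Complex.I) := by
    intro k
    rw [hNF]
    simp only [hEntdef]
    norm_num
    rw [← Complex.exp_nat_mul, ← Complex.exp_nat_mul, ← Complex.exp_add]
    congr 1
    simp only [hθ1, hθ2]; push_cast; rw [hn2C]; field_simp; ring
  -- the sums over k
  have hcardIcc : (Finset.Icc 1 n).card = n := by
    rw [Nat.card_Icc]; omega
  have hS0011 : ∑ k ∈ Finset.Icc 1 n, (-1:ℂ)^k * kronFam n (N k) (e 0 0) (e 1 1)
      = (n:ℂ) := by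
    rw [Finset.sum_congr rfl fun k _ => by
      rw [hF0011 k, ← mul_pow, show ((-1:ℂ)*(-1)) = 1 by norm_num, one_pow]]
    rw [Finset.sum_const, hcardIcc, nsmul_eq_mul, mul_one]
  have hS1100 : ∑ k ∈ Finset.Icc 1 n, (-1:ℂ)^k * kronFam n (N k) (e 1 1) (e 0 0)
      = (n:ℂ) := by
    rw [Finset.sum_congr rfl fun k _ => by
      rw [hF1100 k, ← mul_pow, show ((-1:ℂ)*(-1)) = 1 by norm_num, one_pow]]
    rw [Finset.sum_const, hcardIcc, nsmul_eq_mul, mul_one]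
  have hptw1 : ∀ k : ℕ,
      (-1:ℂ)^k * Complex.exp (-((((-1:ℝ)^k * ((n:ℝ) * ε)) : ℝ) : ℂ) * Complex.I)
      = (-1:ℂ)^k * (Real.cos ((n:ℝ)*ε) : ℂ) - Complex.I * (Real.sin ((n:ℝ)*ε) : ℂ) := by
    intro k
    rcases Nat.even_or_odd k with hk | hk
    · have h1 : ((((-1:ℝ)^k * ((n:ℝ) * ε)) : ℝ) : ℂ) = (((n:ℝ) * ε : ℝ) : ℂ) := by
        rw [hk.neg_one_pow]; push_cast; ring
      rw [h1, expRIneg, hk.neg_one_pow]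
      ring
    · have h1 : (-((((-1:ℝ)^k * ((n:ℝ) * ε)) : ℝ) : ℂ)) * Complex.I
          = (((n:ℝ) * ε : ℝ) : ℂ) * Complex.I := by
        rw [hk.neg_one_pow]; push_cast; ring
      rw [h1, expRI, hk.neg_one_pow]
      ring
  have hptw2 : ∀ k : ℕ,
      (-1:ℂ)^k * Complex.exp (((((-1:ℝ)^k * ((n:ℝ) * ε)) : ℝ) : ℂ) * Complex.I)
      = (-1:ℂ)^k * (Real.cos ((n:ℝ)*ε) : ℂ) + Complex.I * (Real.sin ((n:ℝ)*ε) : ℂ) := by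
    intro k
    rcases Nat.even_or_odd k with hk | hk
    · have h1 : ((((-1:ℝ)^k * ((n:ℝ) * ε)) : ℝ) : ℂ) = (((n:ℝ) * ε : ℝ) : ℂ) := by
        rw [hk.neg_one_pow]; push_cast; ring
      rw [h1, expRI, hk.neg_one_pow]
      ring
    · have h1 : ((((-1:ℝ)^k * ((n:ℝ) * ε)) : ℝ) : ℂ) * Complex.I
          = (-(((n:ℝ) * ε : ℝ) : ℂ)) * Complex.I := by
        rw [hk.neg_one_pow]; push_cast; ring
      rw [h1, expRIneg, hk.neg_one_pow]
      ring
  have hS0110 : ∑ k ∈ Finset.Icc 1 n, (-1:ℂ)^k * kronFam n (N k) (e 0 1) (e 1 0)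
      = -(n:ℂ) * (Complex.I * (Real.sin ((n:ℝ)*ε) : ℂ)) := by
    rw [Finset.sum_congr rfl fun k _ => by rw [hF0110 k, hptw1 k]]
    rw [Finset.sum_sub_distrib, ← Finset.sum_mul, sumNegOnePowIcc n ⟨m, hm⟩,
      Finset.sum_const, hcardIcc, zero_mul, zero_sub, nsmul_eq_mul]
    ring
  have hS1001 : ∑ k ∈ Finset.Icc 1 n, (-1:ℂ)^k * kronFam n (N k) (e 1 0) (e 0 1)
      = (n:ℂ) * (Complex.I * (Real.sin ((n:ℝ)*ε) : ℂ)) := by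
    rw [Finset.sum_congr rfl fun k _ => by rw [hF1001 k, hptw2 k]]
    rw [Finset.sum_add_distrib, ← Finset.sum_mul, sumNegOnePowIcc n ⟨m, hm⟩,
      Finset.sum_const, hcardIcc, zero_mul, zero_add, nsmul_eq_mul]
  -- W entries
  have hIf0 : ∀ (x y z w v : Fin 2), ¬(x = z ∧ y = w) →
      (if x = v ∧ z = v then (1:ℂ) else 0) * (if y = v ∧ w = v then (1:ℂ) else 0) = 0 := by
    intro x y z w v h
    by_cases hx : x = z
    · have hy : y ≠ w := fun hyw => h ⟨hx, hyw⟩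
      rw [if_neg (show ¬(y = v ∧ w = v) from fun hc => hy (hc.1.trans hc.2.symm)), mul_zero]
    · rw [if_neg (show ¬(x = v ∧ z = v) from fun hc => hx (hc.1.trans hc.2.symm)), zero_mul]
  have hWmix : ∀ a b c d : Fin 2, (a = c ∨ b = d) → ¬(a = c ∧ b = d) →
      W (e a b) (e c d) = 0 := by
    intro a b c d h1 h2
    rw [hWent, hPp, hPm, if_neg (fun hh => h2 ((hee a b c d).mp hh)),
      show ∑ k ∈ Finset.Icc 1 n, (-1:ℂ)^k * kronFam n (N k) (e a b) (e c d) = 0 from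
        Finset.sum_eq_zero fun k _ => by rw [hFzero k a b c d h1, mul_zero],
      hIf0 a b c d 0 h2, hIf0 a b c d 1 h2]
    norm_num
  have hW0000 : W (e 0 0) (e 0 0) = 0 := by
    rw [hWent, hPp, hPm, if_pos rfl,
      show ∑ k ∈ Finset.Icc 1 n, (-1:ℂ)^k * kronFam n (N k) (e 0 0) (e 0 0) = 0 from
        Finset.sum_eq_zero fun k _ => by rw [hFzero k 0 0 0 0 (Or.inl rfl), mul_zero]]
    norm_num
  have hW1111 : W (e 1 1) (e 1 1) = 0 := by
    rw [hWent, hPp, hPm, if_pos rfl,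
      show ∑ k ∈ Finset.Icc 1 n, (-1:ℂ)^k * kronFam n (N k) (e 1 1) (e 1 1) = 0 from
        Finset.sum_eq_zero fun k _ => by rw [hFzero k 1 1 1 1 (Or.inl rfl), mul_zero]]
    norm_num
  have hW0101 : W (e 0 1) (e 0 1) = 1/2 := by
    rw [hWent, hPp, hPm, if_pos rfl,
      show ∑ k ∈ Finset.Icc 1 n, (-1:ℂ)^k * kronFam n (N k) (e 0 1) (e 0 1) = 0 from
        Finset.sum_eq_zero fun k _ => by rw [hFzero k 0 1 0 1 (Or.inl rfl), mul_zero]]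
    norm_num
  have hW1010 : W (e 1 0) (e 1 0) = 1/2 := by
    rw [hWent, hPp, hPm, if_pos rfl,
      show ∑ k ∈ Finset.Icc 1 n, (-1:ℂ)^k * kronFam n (N k) (e 1 0) (e 1 0) = 0 from
        Finset.sum_eq_zero fun k _ => by rw [hFzero k 1 0 1 0 (Or.inl rfl), mul_zero]]
    norm_num
  have hW0011 : W (e 0 0) (e 1 1) = -(1/2) := by
    rw [hWent, hPp, hPm, if_neg hne3, hS0011]
    field_simp
    simp
  have hW1100 : W (e 1 1) (e 0 0) = -(1/2) := by
    rw [hWent, hPp, hPm, if_neg (Ne.symm hne3), hS1100]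
    field_simp
    simp
  have hW0110 : W (e 0 1) (e 1 0)
      = (1/2) * (Complex.I * (Real.sin ((n:ℝ)*ε) : ℂ)) := by
    rw [hWent, hPp, hPm, if_neg hne4, hS0110]
    field_simp
    simp
  have hW1001 : W (e 1 0) (e 0 1)
      = -((1/2) * (Complex.I * (Real.sin ((n:ℝ)*ε) : ℂ))) := by
    rw [hWent, hPp, hPm, if_neg (Ne.symm hne4), hS1001]
    field_simp
    simp
  -- phases
  set E : ℂ := Complex.exp (Complex.I * (π/4)) with hE
  set E' : ℂ := Complex.exp (-Complex.I * (π/4)) with hE'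
  have hEE' : E * E' = 1 := by
    rw [hE, hE', ← Complex.exp_add,
      show Complex.I * ((π:ℂ)/4) + -Complex.I * ((π:ℂ)/4) = 0 by ring, Complex.exp_zero]
  have hEE : E * E = Complex.I := by
    rw [hE, ← Complex.exp_add,
      show Complex.I * ((π:ℂ)/4) + Complex.I * ((π:ℂ)/4) = ((π/2 : ℝ) : ℂ) * Complex.I by
        push_cast; ring,
      expRI]
    simp
  have hE'E' : E' * E' = -Complex.I := by
    rw [hE', ← Complex.exp_add,
      show -Complex.I * ((π:ℂ)/4) + -Complex.I * ((π:ℂ)/4) = -((π/2 : ℝ) : ℂ) * Complex.I by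
        push_cast; ring,
      expRIneg]
    simp
  have hconjE : (starRingEnd ℂ) E = E' := by
    rw [hE, hE', ← Complex.exp_conj]
    congr 1
    simp [map_div₀, map_ofNat]
  have hconjE' : (starRingEnd ℂ) E' = E := by
    rw [hE, hE', ← Complex.exp_conj]
    congr 1
    simp [map_div₀, map_ofNat]
  have hv00 : ψ (e 0 0) = 1/2 := by rw [hψv]; norm_num
  have hv01 : ψ (e 0 1) = 1/2 * E' := by
    rw [hψv]; rw [if_pos rfl, if_neg (by decide : ¬(1:Fin 2) = 0)]; ring
  have hv10 : ψ (e 1 0) = 1/2 * E := by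
    rw [hψv]; rw [if_neg (by decide : ¬(1:Fin 2) = 0), if_pos rfl]; ring
  have hv11 : ψ (e 1 1) = 1/2 := by
    rw [hψv]; rw [if_neg (by decide : ¬(1:Fin 2) = 0), if_neg (by decide : ¬(1:Fin 2) = 0)]
    rw [mul_assoc, hEE', mul_one]
  constructor
  · rw [hdot]
    rw [hexp (fun i => (starRingEnd ℂ) (ψ i) * ∑ j ∈ S, W i j * ψ j)]
    rw [hexp (fun j => W (e 0 0) j * ψ j), hexp (fun j => W (e 0 1) j * ψ j),
      hexp (fun j => W (e 1 0) j * ψ j), hexp (fun j => W (e 1 1) j * ψ j)]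
    rw [hv00, hv01, hv10, hv11,
      hW0000, hW1111, hW0101, hW1010, hW0011, hW1100, hW0110, hW1001,
      hWmix 0 0 0 1 (Or.inl rfl) (by decide), hWmix 0 0 1 0 (Or.inr rfl) (by decide),
      hWmix 0 1 0 0 (Or.inl rfl) (by decide), hWmix 0 1 1 1 (Or.inr rfl) (by decide),
      hWmix 1 0 0 0 (Or.inr rfl) (by decide), hWmix 1 0 1 1 (Or.inl rfl) (by decide),
      hWmix 1 1 0 1 (Or.inr rfl) (by decide), hWmix 1 1 1 0 (Or.inl rfl) (by decide)]
    rw [_root_.map_mul, _root_.map_mul, hconjE, hconjE']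
    rw [show ((starRingEnd ℂ) (1/2 : ℂ)) = 1/2 by rw [map_div₀, _root_.map_one, map_ofNat]]
    rw [show ((-(1/4) * Real.sin ((n:ℝ)*ε) : ℝ) : ℂ)
        = -(1/4) * ((Real.sin ((n:ℝ)*ε) : ℝ) : ℂ) by push_cast; ring]
    linear_combination (1/4 : ℂ) * hEE'
      + (Complex.I * (Real.sin ((n:ℝ)*ε) : ℂ)/8) * hEE
      - (Complex.I * (Real.sin ((n:ℝ)*ε) : ℂ)/8) * hE'E'
      + (((Real.sin ((n:ℝ)*ε) : ℝ) : ℂ)/4) * Complex.I_sq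
  · intro hεpos
    have hn0R : (0:ℝ) < n := by positivity
    have h1 : (n:ℝ) * ε ≤ π/2 := by
      have h2 : (n:ℝ) * ε ≤ (n:ℝ) * (π/(2*n)) :=
        mul_le_mul_of_nonneg_left hε₁ (le_of_lt hn0R)
      calc (n:ℝ) * ε ≤ (n:ℝ) * (π/(2*n)) := h2
        _ = π/2 := by field_simp; try ring
    have hpos : 0 < (n:ℝ) * ε := mul_pos hn0R hεpos
    have hlt : (n:ℝ) * ε < π := lt_of_le_of_lt h1 (by linarith [Real.pi_pos])
    have hsin : 0 < Real.sin ((n:ℝ)*ε) := Real.sin_pos_of_pos_of_lt_pi hpos hlt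
    nlinarith [hsin]
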